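/- There exists a unique ν₀ > 0 such that √π · Γ(ν₀ + 3/2) = 8 · Γ(ν₀ + 1), and for all ν ≥ ν₀ one has √π · Γ(ν + 3/2) ≥ 8 · Γ(ν + 1). Moreover 19 < ν₀ < 20. -/

import Mathlib

open Real MeasureTheory Set intervalIntegral

noncomputable def Bint (ν : ℝ) : ℝ :=
  ∫ x in (0:ℝ)..1, x ^ ν * (1 - x) ^ (-(1/2) : ℝ)

lemma Bint_integrable {ν : ℝ} (hν : 0 < ν) :
    IntervalIntegrable (fun x => x ^ ν * (1 - x) ^ (-(1/2) : ℝ)) volume 0 1 := by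
  apply IntervalIntegrable.continuousOn_mul
  · have h : IntervalIntegrable (fun x : ℝ => x ^ (-(1/2) : ℝ)) volume 0 1 :=
      intervalIntegrable_rpow' (by norm_num)
    have h2 := (h.comp_sub_left 1).symm
    simpa using h2
  · intro x _
    exact (Real.continuousAt_rpow_const x ν (Or.inr hν.le)).continuousWithinAt

lemma Bint_eq {ν : ℝ} (hν : 0 < ν) :
    Real.Gamma (ν + 1) * Real.sqrt Real.pi = Real.Gamma (ν + 3/2) * Bint ν := by
  have h := Complex.Gamma_mul_Gamma_eq_betaIntegral (s := (ν : ℂ) + 1) (t := 1/2)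
    (by simp; linarith) (by norm_num)
  have hbeta : Complex.betaIntegral ((ν : ℂ) + 1) (1/2) = ((Bint ν : ℝ) : ℂ) := by
    rw [Complex.betaIntegral, Bint, ← intervalIntegral.integral_ofReal]
    apply intervalIntegral.integral_congr
    intro x hx
    rw [uIcc_of_le (by norm_num : (0:ℝ) ≤ 1)] at hx
    obtain ⟨hx0, hx1⟩ := hx
    have e1 : ((x:ℂ)) ^ ((ν:ℂ) + 1 - 1) = ((x ^ ν : ℝ) : ℂ) := by
      rw [Complex.ofReal_cpow hx0]
      congr 1
      ring
    have e2 : ((1:ℂ) - (x:ℂ)) ^ ((1/2 : ℂ) - 1) = (((1 - x) ^ (-(1/2) : ℝ) : ℝ) : ℂ) := by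
      rw [Complex.ofReal_cpow (by linarith : (0:ℝ) ≤ 1 - x)]
      push_cast
      congr 1
      norm_num
    simp only [Complex.ofReal_mul, e1, e2]
  rw [hbeta] at h
  have h1 : Complex.Gamma ((ν : ℂ) + 1) = ((Real.Gamma (ν + 1) : ℝ) : ℂ) := by
    rw [← Complex.Gamma_ofReal]; push_cast; ring_nf
  have h2 : Complex.Gamma (1/2 : ℂ) = ((Real.sqrt Real.pi : ℝ) : ℂ) := by
    rw [show (1/2 : ℂ) = ((1/2 : ℝ) : ℂ) by push_cast; ring, Complex.Gamma_ofReal,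
      Real.Gamma_one_half_eq]
  have h3 : Complex.Gamma ((ν : ℂ) + 1 + 1/2) = ((Real.Gamma (ν + 3/2) : ℝ) : ℂ) := by
    rw [show ((ν : ℂ) + 1 + 1/2) = ((ν + 3/2 : ℝ) : ℂ) by push_cast; ring, Complex.Gamma_ofReal]
  rw [h1, h2, h3] at h
  exact_mod_cast h

lemma Bint_strictAnti {a b : ℝ} (ha : 0 < a) (hab : a < b) : Bint b < Bint a := by
  have hia := Bint_integrable ha
  have hib := Bint_integrable (ha.trans hab)
  rw [← sub_pos, Bint, Bint, ← intervalIntegral.integral_sub hia hib]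
  apply intervalIntegral_pos_of_pos_on (hia.sub hib) _ (by norm_num)
  intro x hx
  obtain ⟨hx0, hx1⟩ := hx
  have h1 : x ^ b < x ^ a := Real.rpow_lt_rpow_of_exponent_gt hx0 hx1 hab
  have h2 : 0 < (1 - x) ^ (-(1/2) : ℝ) := Real.rpow_pos_of_pos (by linarith) _
  nlinarith

noncomputable def Gfun (ν : ℝ) : ℝ :=
  Real.sqrt Real.pi * Real.Gamma (ν + 1) / Real.Gamma (ν + 3/2)

lemma Gfun_eq_Bint {ν : ℝ} (hν : 0 < ν) : Gfun ν = Bint ν := by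
  have hpos : 0 < Real.Gamma (ν + 3/2) := Real.Gamma_pos_of_pos (by linarith)
  have h := Bint_eq hν
  rw [Gfun, div_eq_iff hpos.ne']
  linear_combination h

lemma Gfun_strictAnti {a b : ℝ} (ha : 0 < a) (hab : a < b) : Gfun b < Gfun a := by
  rw [Gfun_eq_Bint ha, Gfun_eq_Bint (ha.trans hab)]
  exact Bint_strictAnti ha hab

lemma sqrt_pi_pos : 0 < Real.sqrt Real.pi := Real.sqrt_pos.mpr Real.pi_pos

lemma sqrt_pi_sq : Real.sqrt Real.pi * Real.sqrt Real.pi = Real.pi :=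
  Real.mul_self_sqrt Real.pi_pos.le

lemma eq_iff {ν : ℝ} (hν : 0 < ν) :
    (Real.sqrt Real.pi * Real.Gamma (ν + 3/2) = 8 * Real.Gamma (ν + 1)) ↔
      Gfun ν = Real.pi / 8 := by
  have hpos : 0 < Real.Gamma (ν + 3/2) := Real.Gamma_pos_of_pos (by linarith)
  have hs := sqrt_pi_pos
  have hsq := sqrt_pi_sq
  rw [Gfun, div_eq_div_iff hpos.ne' (by norm_num : (8:ℝ) ≠ 0)]
  constructor
  · intro h; nlinarith
  · intro h; nlinarith

lemma Gamma_at (n : ℕ) : Real.Gamma (n + 1 : ℝ) = Nat.factorial n := by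
  exact_mod_cast Real.Gamma_nat_eq_factorial n

lemma Gfun_19 : Gfun 19 = 2 ^ 39 * (Nat.factorial 19 : ℝ) ^ 2 / (Nat.factorial 39 : ℝ) := by
  have hd := Real.Gamma_mul_Gamma_add_half (20 : ℝ)
  have h20 : Real.Gamma (20 : ℝ) = (Nat.factorial 19 : ℝ) := by
    rw [show (20:ℝ) = ((19:ℕ) : ℝ) + 1 by norm_num, Gamma_at]
  have h40 : Real.Gamma (2 * (20 : ℝ)) = (Nat.factorial 39 : ℝ) := by
    rw [show 2 * (20:ℝ) = ((39:ℕ) : ℝ) + 1 by norm_num, Gamma_at]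
  have hexp : (2 : ℝ) ^ ((1 : ℝ) - 2 * 20) = ((2:ℝ) ^ (39:ℕ))⁻¹ := by
    rw [show (1:ℝ) - 2 * 20 = ((-39 : ℤ) : ℝ) by norm_num, Real.rpow_intCast]
    norm_num
  rw [h20, h40, hexp] at hd
  have hpos : 0 < Real.Gamma ((20 : ℝ) + 1/2) := Real.Gamma_pos_of_pos (by norm_num)
  have hfac : (0:ℝ) < (Nat.factorial 39 : ℝ) := by positivity
  rw [Gfun, show (19:ℝ) + 1 = 20 by norm_num, show (19:ℝ) + 3/2 = 20 + 1/2 by norm_num, h20,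
    div_eq_div_iff hpos.ne' hfac.ne']
  linear_combination (-(2:ℝ) ^ (39:ℕ) * (Nat.factorial 19 : ℝ)) * hd

lemma Gfun_20 : Gfun 20 = 2 ^ 41 * (Nat.factorial 20 : ℝ) ^ 2 / (Nat.factorial 41 : ℝ) := by
  have hd := Real.Gamma_mul_Gamma_add_half (21 : ℝ)
  have h21 : Real.Gamma (21 : ℝ) = (Nat.factorial 20 : ℝ) := by
    rw [show (21:ℝ) = ((20:ℕ) : ℝ) + 1 by norm_num, Gamma_at]
  have h42 : Real.Gamma (2 * (21 : ℝ)) = (Nat.factorial 41 : ℝ) := by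
    rw [show 2 * (21:ℝ) = ((41:ℕ) : ℝ) + 1 by norm_num, Gamma_at]
  have hexp : (2 : ℝ) ^ ((1 : ℝ) - 2 * 21) = ((2:ℝ) ^ (41:ℕ))⁻¹ := by
    rw [show (1:ℝ) - 2 * 21 = ((-41 : ℤ) : ℝ) by norm_num, Real.rpow_intCast]
    norm_num
  rw [h21, h42, hexp] at hd
  have hpos : 0 < Real.Gamma ((21 : ℝ) + 1/2) := Real.Gamma_pos_of_pos (by norm_num)
  have hfac : (0:ℝ) < (Nat.factorial 41 : ℝ) := by positivity
  rw [Gfun, show (20:ℝ) + 1 = 21 by norm_num, show (20:ℝ) + 3/2 = 21 + 1/2 by norm_num, h21,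
    div_eq_div_iff hpos.ne' hfac.ne']
  linear_combination (-(2:ℝ) ^ (41:ℕ) * (Nat.factorial 20 : ℝ)) * hd

lemma Gfun_19_gt : Real.pi / 8 < Gfun 19 := by
  rw [Gfun_19]
  have h := Real.pi_lt_d2
  have hfac : (0:ℝ) < (Nat.factorial 39 : ℝ) := by positivity
  rw [div_lt_div_iff₀ (by norm_num) hfac]
  calc Real.pi * (Nat.factorial 39 : ℝ) < 3.15 * (Nat.factorial 39 : ℝ) := by nlinarith
    _ ≤ 2 ^ 39 * (Nat.factorial 19 : ℝ) ^ 2 * 8 := by norm_num [Nat.factorial]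

lemma Gfun_20_lt : Gfun 20 < Real.pi / 8 := by
  rw [Gfun_20]
  have h := Real.pi_gt_d2
  have hfac : (0:ℝ) < (Nat.factorial 41 : ℝ) := by positivity
  rw [div_lt_div_iff₀ hfac (by norm_num)]
  calc 2 ^ 41 * (Nat.factorial 20 : ℝ) ^ 2 * 8 ≤ 3.14 * (Nat.factorial 41 : ℝ) := by
        norm_num [Nat.factorial]
    _ < Real.pi * (Nat.factorial 41 : ℝ) := by nlinarith

lemma Gfun_continuousOn : ContinuousOn Gfun (Icc (19:ℝ) 20) := by
  intro ν hν
  obtain ⟨h19, _⟩ := hν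
  have hne1 : ∀ m : ℕ, ν + 1 ≠ -m := by
    intro m
    have hm : (-(m:ℝ)) < ν + 1 := by
      have : (0:ℝ) ≤ m := m.cast_nonneg
      linarith
    exact hm.ne'
  have hne2 : ∀ m : ℕ, ν + 3/2 ≠ -m := by
    intro m
    have hm : (-(m:ℝ)) < ν + 3/2 := by
      have : (0:ℝ) ≤ m := m.cast_nonneg
      linarith
    exact hm.ne'
  have hc1 : ContinuousAt (fun x : ℝ => Real.Gamma (x + 1)) ν :=
    ContinuousAt.comp (f := fun x : ℝ => x + 1)
      (Real.differentiableAt_Gamma hne1).continuousAt (by fun_prop)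
  have hc2 : ContinuousAt (fun x : ℝ => Real.Gamma (x + 3/2)) ν :=
    ContinuousAt.comp (f := fun x : ℝ => x + 3/2)
      (Real.differentiableAt_Gamma hne2).continuousAt (by fun_prop)
  have hpos : Real.Gamma (ν + 3/2) ≠ 0 :=
    (Real.Gamma_pos_of_pos (by linarith)).ne'
  exact ((continuousAt_const.mul hc1).div hc2 hpos).continuousWithinAt

theorem exists_unique_nu_zero :
    ∃ ν₀ : ℝ, 0 < ν₀ ∧
      Real.sqrt Real.pi * Real.Gamma (ν₀ + 3/2) = 8 * Real.Gamma (ν₀ + 1) ∧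
      (∀ ν : ℝ, 0 < ν →
        Real.sqrt Real.pi * Real.Gamma (ν + 3/2) = 8 * Real.Gamma (ν + 1) → ν = ν₀) ∧
      (∀ ν : ℝ, ν₀ ≤ ν →
        Real.sqrt Real.pi * Real.Gamma (ν + 3/2) ≥ 8 * Real.Gamma (ν + 1)) ∧
      19 < ν₀ ∧ ν₀ < 20 := by
  have hmem : Real.pi / 8 ∈ Ioo (Gfun 20) (Gfun 19) := ⟨Gfun_20_lt, Gfun_19_gt⟩
  obtain ⟨ν₀, hν₀mem, hν₀eq⟩ :=
    intermediate_value_Ioo' (by norm_num : (19:ℝ) ≤ 20) Gfun_continuousOn hmem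
  obtain ⟨h19, h20⟩ := hν₀mem
  have hpos : (0:ℝ) < ν₀ := by linarith
  refine ⟨ν₀, hpos, ?_, ?_, ?_, h19, h20⟩
  · exact (eq_iff hpos).mpr hν₀eq
  · intro ν hν heq
    have hG : Gfun ν = Real.pi / 8 := (eq_iff hν).mp heq
    rcases lt_trichotomy ν ν₀ with h | h | h
    · exfalso
      have := Gfun_strictAnti hν h
      rw [hG, hν₀eq] at this; exact lt_irrefl _ this
    · exact h
    · exfalso
      have := Gfun_strictAnti hpos h
      rw [hG, hν₀eq] at this; exact lt_irrefl _ this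
  · intro ν hν
    have hνpos : (0:ℝ) < ν := lt_of_lt_of_le hpos hν
    have hG : Gfun ν ≤ Real.pi / 8 := by
      rcases eq_or_lt_of_le hν with h | h
      · rw [← h, hν₀eq]
      · exact le_of_lt (hν₀eq ▸ Gfun_strictAnti hpos h)
    have hΓpos : 0 < Real.Gamma (ν + 3/2) := Real.Gamma_pos_of_pos (by linarith)
    have hs := sqrt_pi_pos
    have hsq := sqrt_pi_sq
    rw [Gfun, div_le_iff₀ hΓpos] at hG
    nlinarith
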